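/- arXiv:1312.5382 — 3 statements merged into one kernel-verified Lean document; each statement's English description precedes it below -/
import Mathlib

section
/- Let n be a positive integer divisible by 3 and let k and l be integers with gcd(n, k, l) = 1 and 3 ∤ k+l, satisfying condition (C): n ∣ 3k or n ∣ 3l or n ∣ 3(k−l). Then there exist an integer f with n ∣ 3f and an integer p with gcd(p, n) = 1 and a group homomorphism ν : E_n(k,l) → ℤ/nℤ with ν(a) = 1 and ν(x) = f whose kernel is isomorphic to G_n(0,p). -/
namespace CPG

/-- The free group on generators `x_0, …, x_{n-1}` indexed by `ZMod n`. -/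
abbrev FG (n : ℕ) := FreeGroup (ZMod n)

/-- The automorphism of the free group sending `x_j` to `x_{j+i}`. -/
def shiftA (n : ℕ) (i : ZMod n) : MulAut (FG n) :=
  FreeGroup.freeGroupCongr (Equiv.addRight i)

/-- The shift automorphism `θ` of the free group, `x_j ↦ x_{j+1}`. -/
def shiftAut (n : ℕ) : MulAut (FG n) := shiftA n 1

/-- The `θ`-orbit of a word `w`: the relator set of the cyclic presentation `P_n(w)`. -/
def rels (n : ℕ) (w : FG n) : Set (FG n) := Set.range fun i : ZMod n => shiftA n i w

/-- The cyclically presented group `G_n(w)`. -/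
abbrev Gp (n : ℕ) (w : FG n) := PresentedGroup (rels n w)

lemma shiftA_shiftA (n : ℕ) (i j : ZMod n) (x : FG n) :
    shiftA n i (shiftA n j x) = shiftA n (j + i) x := by
  show FreeGroup.map _ (FreeGroup.map _ x) = FreeGroup.map _ x
  rw [FreeGroup.map.comp]
  have h : (⇑(Equiv.addRight i) ∘ ⇑(Equiv.addRight j)) = ⇑(Equiv.addRight (j + i)) := by
    funext z
    simp [add_assoc]
  rw [h]

lemma image_shiftAut_rels (n : ℕ) (w : FG n) :
    (shiftAut n) '' rels n w = rels n w := by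
  ext r
  constructor
  · rintro ⟨s, ⟨i, rfl⟩, rfl⟩
    exact ⟨i + 1, (shiftA_shiftA n 1 i w).symm⟩
  · rintro ⟨i, rfl⟩
    refine ⟨shiftA n (i - 1) w, ⟨i - 1, rfl⟩, ?_⟩
    rw [shiftAut, shiftA_shiftA, sub_add_cancel]

lemma map_normalClosure_rels (n : ℕ) (w : FG n) :
    (Subgroup.normalClosure (rels n w)).map (shiftAut n).toMonoidHom
      = Subgroup.normalClosure (rels n w) := by
  rw [Subgroup.map_normalClosure (rels n w) (shiftAut n).toMonoidHom (shiftAut n).surjective]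
  congr 1
  exact image_shiftAut_rels n w

/-- The shift automorphism `θ` of the cyclically presented group `G_n(w)`. -/
def shiftG (n : ℕ) (w : FG n) : MulAut (Gp n w) :=
  QuotientGroup.congr (Subgroup.normalClosure (rels n w)) (Subgroup.normalClosure (rels n w))
    (shiftAut n) (map_normalClosure_rels n w)

/-- The generator `x_k` (subscript mod `n`). -/
def xg (n : ℕ) (k : ℤ) : FG n := FreeGroup.of (k : ZMod n)

/-- The word `x_0 x_k x_l`. -/
def wkl (n : ℕ) (k l : ℤ) : FG n := xg n 0 * xg n k * xg n l

/-- The cyclically presented group `G_n(k,l) = G_n(x_0 x_k x_l)`. -/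
abbrev Gkl (n : ℕ) (k l : ℤ) := Gp n (wkl n k l)

/-- The shift automorphism of `G_n(k,l)`. -/
def shiftKL (n : ℕ) (k l : ℤ) : MulAut (Gkl n k l) := shiftG n (wkl n k l)

end CPG

namespace CPG

/-- The generator `a` of the free group on `{a, x}` (modeled on `Bool`, `a = of false`). -/
def ga : FreeGroup Bool := FreeGroup.of false

/-- The generator `x` of the free group on `{a, x}` (`x = of true`). -/
def gx : FreeGroup Bool := FreeGroup.of true

/-- The relator set of the presentation `(a, x : a^n, W)`. -/
def rels2 (n : ℕ) (W : FreeGroup Bool) : Set (FreeGroup Bool) := {ga ^ n, W}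

/-- The group with presentation `(a, x : a^n, W)`. -/
abbrev E2 (n : ℕ) (W : FreeGroup Bool) := PresentedGroup (rels2 n W)

/-- The image of `a` in `(a, x : a^n, W)`. -/
def a2 (n : ℕ) (W : FreeGroup Bool) : E2 n W := PresentedGroup.of false

/-- The image of `x` in `(a, x : a^n, W)`. -/
def x2 (n : ℕ) (W : FreeGroup Bool) : E2 n W := PresentedGroup.of true

/-- The relator set of `E_n(k,l) = (a, x : a^n, x a^k x a^(l-k) x a^(-l))`. -/
def relsE (n : ℕ) (k l : ℤ) : Set (FreeGroup Bool) :=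
  {ga ^ n, gx * ga ^ k * gx * ga ^ (l - k) * gx * ga ^ (-l)}

/-- The group `E_n(k,l)` with presentation `(a, x : a^n, x a^k x a^(l-k) x a^(-l))`. -/
abbrev Ekl (n : ℕ) (k l : ℤ) := PresentedGroup (relsE n k l)

/-- The image of `a` in `E_n(k,l)`. -/
def aE (n : ℕ) (k l : ℤ) : Ekl n k l := PresentedGroup.of false

/-- The image of `x` in `E_n(k,l)`. -/
def xE (n : ℕ) (k l : ℤ) : Ekl n k l := PresentedGroup.of true

end CPG
namespace CPG14
open CPG Multiplicative

section zmod
variable {H : Type*} [Group H]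

/-- The `ℤ → Additive H` hom `m ↦ h^m` factored through `ZMod n`. -/
def zmodAdd (n : ℕ) (h : H) (hh : h ^ n = 1) : ZMod n →+ Additive H :=
  ZMod.lift n ⟨zmultiplesHom (Additive H) (Additive.ofMul h), by
    show ((n : ℤ) • Additive.ofMul h) = 0
    rw [← ofMul_zpow, zpow_natCast, hh]; rfl⟩

/-- The hom `Multiplicative (ZMod n) →* H` sending `ofAdd 1` to `h`, given `h ^ n = 1`. -/
def zmodHom (n : ℕ) (h : H) (hh : h ^ n = 1) : Multiplicative (ZMod n) →* H where
  toFun c := (zmodAdd n h hh c.toAdd).toMul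
  map_one' := by simp
  map_mul' a b := by simp [toAdd_mul, map_add]

lemma zmodHom_int (n : ℕ) (h : H) (hh : h ^ n = 1) (m : ℤ) :
    zmodHom n h hh (ofAdd ((m : ZMod n))) = h ^ m := by
  simp [zmodHom, zmodAdd, ZMod.lift_coe, zmultiplesHom]

lemma mhom_ext {M : Type*} [Group M] {n : ℕ} {F G : Multiplicative (ZMod n) →* M}
    (h : F (ofAdd 1) = G (ofAdd 1)) : F = G := by
  refine MonoidHom.ext fun c => ?_
  obtain ⟨m, hm⟩ := ZMod.intCast_surjective (n := n) (Multiplicative.toAdd c)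
  have hc : c = ofAdd ((m : ZMod n)) := by rw [hm, ofAdd_toAdd]
  have h1 : (ofAdd ((m : ZMod n))) = (ofAdd (1 : ZMod n)) ^ m := by
    rw [← ofAdd_zsmul]
    congr 1
    rw [zsmul_eq_mul, mul_one]
  rw [hc, h1, map_zpow, map_zpow, h]

end zmod

section shift

lemma image_shiftA_rels (n : ℕ) (i : ZMod n) (w : FG n) :
    (shiftA n i) '' rels n w = rels n w := by
  ext r
  constructor
  · rintro ⟨s, ⟨j, rfl⟩, rfl⟩
    exact ⟨j + i, (shiftA_shiftA n i j w).symm⟩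
  · rintro ⟨j, rfl⟩
    exact ⟨shiftA n (j - i) w, ⟨j - i, rfl⟩, by rw [shiftA_shiftA, sub_add_cancel]⟩

lemma map_ncl (n : ℕ) (i : ZMod n) (w : FG n) :
    (Subgroup.normalClosure (rels n w)).map (shiftA n i).toMonoidHom
      = Subgroup.normalClosure (rels n w) := by
  rw [Subgroup.map_normalClosure (rels n w) (shiftA n i).toMonoidHom (shiftA n i).surjective]
  congr 1
  exact image_shiftA_rels n i w

/-- The shift automorphism of `G_n(w)` by `i`. -/
def shG (n : ℕ) (w : FG n) (i : ZMod n) : MulAut (Gp n w) :=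
  QuotientGroup.congr (Subgroup.normalClosure (rels n w)) (Subgroup.normalClosure (rels n w))
    (shiftA n i) (map_ncl n i w)

lemma shG_mk (n : ℕ) (w : FG n) (i : ZMod n) (z : FG n) :
    shG n w i (PresentedGroup.mk _ z) = PresentedGroup.mk _ (shiftA n i z) := rfl

lemma shiftA_of (n : ℕ) (i j : ZMod n) :
    shiftA n i (FreeGroup.of j) = FreeGroup.of (j + i) := by
  simp [shiftA]

lemma shG_of (n : ℕ) (w : FG n) (i j : ZMod n) :
    shG n w i (PresentedGroup.of j) = PresentedGroup.of (j + i) := by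
  show shG n w i (PresentedGroup.mk _ (FreeGroup.of j)) = _
  rw [shG_mk, shiftA_of]
  rfl

lemma shiftA_zero (n : ℕ) (z : FG n) : shiftA n 0 z = z := by
  have h : Equiv.addRight (0 : ZMod n) = Equiv.refl _ := by ext a; simp
  simp [shiftA, h]

/-- The shift action of `Multiplicative (ZMod n)` on `G_n(w)`. -/
def phiG (n : ℕ) (w : FG n) : Multiplicative (ZMod n) →* MulAut (Gp n w) where
  toFun c := shG n w c.toAdd
  map_one' := by
    refine MulEquiv.ext fun x => ?_
    induction x using PresentedGroup.induction_on with
    | H z =>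
      show PresentedGroup.mk _ (shiftA n 0 z) = PresentedGroup.mk _ z
      rw [shiftA_zero]
  map_mul' a b := by
    refine MulEquiv.ext fun x => ?_
    induction x using PresentedGroup.induction_on with
    | H z =>
      show PresentedGroup.mk _ (shiftA n (a.toAdd + b.toAdd) z)
        = shG n w a.toAdd (shG n w b.toAdd (PresentedGroup.mk _ z))
      rw [shG_mk, shG_mk, shiftA_shiftA, add_comm]

end shift

end CPG14
namespace CPG14
open CPG Multiplicative

/-- The generator `x_i` of `G_n(0,p)`. -/
def Xg (n : ℕ) (p : ℤ) (i : ZMod n) : Gkl n 0 p := PresentedGroup.of i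

lemma relG (n : ℕ) (p : ℤ) (i : ZMod n) :
    Xg n p i * Xg n p i * Xg n p ((p : ZMod n) + i) = 1 := by
  have hmem : shiftA n i (wkl n 0 p) ∈ Subgroup.normalClosure (rels n (wkl n 0 p)) :=
    Subgroup.subset_normalClosure ⟨i, rfl⟩
  have h1 : PresentedGroup.mk (rels n (wkl n 0 p)) (shiftA n i (wkl n 0 p)) = 1 :=
    (QuotientGroup.eq_one_iff _).mpr hmem
  have h2 : shiftA n i (wkl n 0 p)
      = FreeGroup.of i * FreeGroup.of i * FreeGroup.of ((p : ZMod n) + i) := by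
    simp [wkl, xg, map_mul, shiftA_of]
  rw [h2, map_mul, map_mul] at h1
  exact h1

lemma rot {G : Type*} [Group G] {u v w : G} (h : u * v * w = 1) : v * w * u = 1 := by
  have h2 : v * w * u = u⁻¹ * (u * v * w) * u := by group
  rw [h2, h, mul_one, inv_mul_cancel]

lemma aE_pow (n : ℕ) (k l : ℤ) : (aE n k l) ^ n = 1 := by
  have hmem : (ga ^ n : FreeGroup Bool) ∈ Subgroup.normalClosure (relsE n k l) :=
    Subgroup.subset_normalClosure (Set.mem_insert _ _)
  have h1 : PresentedGroup.mk (relsE n k l) (ga ^ n) = 1 :=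
    (QuotientGroup.eq_one_iff _).mpr hmem
  rw [map_pow] at h1
  exact h1

lemma aE_zpow_n (n : ℕ) (k l : ℤ) : (aE n k l) ^ (n : ℤ) = 1 := by
  rw [zpow_natCast, aE_pow]

lemma aE_congr (n : ℕ) (k l : ℤ) {m m' : ℤ} (h : (n : ℤ) ∣ m - m') :
    (aE n k l) ^ m = (aE n k l) ^ m' := by
  obtain ⟨t, ht⟩ := h
  have hm : m = m' + (n : ℤ) * t := by linarith
  rw [hm, zpow_add, zpow_mul, aE_zpow_n, one_zpow, mul_one]

lemma relE (n : ℕ) (k l : ℤ) :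
    xE n k l * (aE n k l) ^ k * xE n k l * (aE n k l) ^ (l - k) * xE n k l
      * (aE n k l) ^ (-l) = 1 := by
  have hmem : (gx * ga ^ k * gx * ga ^ (l - k) * gx * ga ^ (-l) : FreeGroup Bool)
      ∈ Subgroup.normalClosure (relsE n k l) :=
    Subgroup.subset_normalClosure (Set.mem_insert_iff.mpr (Or.inr rfl))
  have h1 : PresentedGroup.mk (relsE n k l)
      (gx * ga ^ k * gx * ga ^ (l - k) * gx * ga ^ (-l)) = 1 :=
    (QuotientGroup.eq_one_iff _).mpr hmem
  simp only [map_mul, map_zpow] at h1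
  exact h1

end CPG14
namespace CPG14
open CPG Multiplicative SemidirectProduct

section core
variable (n : ℕ) (k l f p : ℤ)

/-- The semidirect product `G_n(0,p) ⋊ C_n`. -/
abbrev SD := (Gkl n 0 p) ⋊[phiG n (wkl n 0 p)] Multiplicative (ZMod n)

lemma phiG_of (w : FG n) (c j : ZMod n) :
    phiG n w (ofAdd c) (PresentedGroup.of j) = PresentedGroup.of (j + c) :=
  shG_of n w c j

/-- Image of `a` in the semidirect product. -/
def tS : SD n p := inr (ofAdd 1)

/-- Image of `x` in the semidirect product. -/
def sS : SD n p := inl (Xg n p 0) * inr (ofAdd ((f : ZMod n)))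

lemma tpow (m : ℤ) :
    (tS n p) ^ m = inl (1 : Gkl n 0 p) * inr (ofAdd ((m : ZMod n))) := by
  rw [map_one, one_mul, tS, ← map_zpow]
  congr 1
  rw [← ofAdd_zsmul]
  congr 1
  rw [zsmul_eq_mul, mul_one]

lemma swap (c : ZMod n) (g : Gkl n 0 p) :
    (inr (ofAdd c) : SD n p) * inl g
      = inl (phiG n (wkl n 0 p) (ofAdd c) g) * inr (ofAdd c) := by
  rw [inl_aut]
  simp [mul_assoc, ← map_mul]

lemma step (g g' : Gkl n 0 p) (c c' : ZMod n) :
    ((inl g * inr (ofAdd c) : SD n p)) * (inl g' * inr (ofAdd c'))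
      = inl (g * phiG n (wkl n 0 p) (ofAdd c) g') * inr (ofAdd (c + c')) := by
  rw [mul_assoc, ← mul_assoc (inr (ofAdd c)), swap, mul_assoc, ← map_mul, ← mul_assoc,
    ← map_mul, ← ofAdd_add]

/-- The homomorphism `E_n(k,l) →* G_n(0,p) ⋊ C_n`. -/
def Phi (hf3 : ((3 * f : ℤ) : ZMod n) = 0)
    (hG : Xg n p 0 * Xg n p ((f + k : ℤ) : ZMod n) * Xg n p ((2 * f + l : ℤ) : ZMod n) = 1) :
    Ekl n k l →* SD n p :=
  PresentedGroup.toGroup (f := fun b => if b then sS n f p else tS n p) (by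
    rintro r (rfl | rfl)
    · rw [map_pow]
      have h0 : (FreeGroup.lift fun b => if b then sS n f p else tS n p) ga = tS n p := by
        simp [ga]
      rw [h0, tS, ← map_pow]
      have h1 : (ofAdd (1 : ZMod n)) ^ n = 1 := by
        rw [← ofAdd_nsmul]
        simp
      rw [h1, map_one]
    · simp only [map_mul, map_zpow, gx, ga, FreeGroup.lift_apply_of, if_true, Bool.false_eq_true, if_false]
      rw [tpow, tpow, tpow]
      simp only [sS]
      rw [step, step, step, step, step]
      simp only [map_one, mul_one, Xg, phiG_of, zero_add]
      have e1 : ((f : ZMod n) + (k : ZMod n)) = ((f + k : ℤ) : ZMod n) := by push_cast; ring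
      have e2 : (((f + k : ℤ) : ZMod n) + (f : ZMod n) + ((l - k : ℤ) : ZMod n))
          = ((2 * f + l : ℤ) : ZMod n) := by push_cast; ring
      have e3 : (((2 * f + l : ℤ) : ZMod n) + (f : ZMod n) + ((-l : ℤ) : ZMod n)) = (0 : ZMod n) := by
        push_cast at hf3 ⊢
        linear_combination hf3
      rw [e1, e2, e3]
      rw [show (PresentedGroup.of (0 : ZMod n) : Gkl n 0 p) * PresentedGroup.of ((f + k : ℤ) : ZMod n)
        * PresentedGroup.of ((2 * f + l : ℤ) : ZMod n) = 1 from hG]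
      simp)

end core
end CPG14
namespace CPG14
open CPG Multiplicative SemidirectProduct

section core2
variable (n : ℕ) (k l f p : ℤ)

lemma Phi_a (hf3) (hG) : Phi n k l f p hf3 hG (aE n k l) = tS n p := by
  show Phi n k l f p hf3 hG (PresentedGroup.of false) = tS n p
  rw [Phi, PresentedGroup.toGroup.of]
  simp

lemma Phi_x (hf3) (hG) : Phi n k l f p hf3 hG (xE n k l) = sS n f p := by
  show Phi n k l f p hf3 hG (PresentedGroup.of true) = sS n f p
  rw [Phi, PresentedGroup.toGroup.of]
  simp

/-- The hom `C_n →* E_n(k,l)`, `c ↦ a^c`. -/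
def psiC : Multiplicative (ZMod n) →* Ekl n k l := zmodHom n (aE n k l) (aE_pow n k l)

lemma psiC_int (m : ℤ) : psiC n k l (ofAdd ((m : ZMod n))) = (aE n k l) ^ m :=
  zmodHom_int n (aE n k l) (aE_pow n k l) m

/-- The image of the generator `x_j` of `G_n(0,p)` in `E_n(k,l)`. -/
def genE (j : ZMod n) : Ekl n k l :=
  psiC n k l (ofAdd j) * xE n k l * (psiC n k l (ofAdd (j + (f : ZMod n))))⁻¹

lemma genE_cast (m : ℤ) :
    genE n k l f ((m : ZMod n)) = (aE n k l) ^ m * xE n k l * (aE n k l) ^ (-(m + f)) := by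
  rw [genE, show ((m : ZMod n) + (f : ZMod n)) = ((m + f : ℤ) : ZMod n) by push_cast; ring,
    psiC_int, psiC_int, ← zpow_neg]

/-- The hom `G_n(0,p) →* E_n(k,l)`. -/
def PsiG (hE : xE n k l * (aE n k l) ^ (-f) * xE n k l * (aE n k l) ^ (p - f) * xE n k l
    * (aE n k l) ^ (-f - p) = 1) : Gkl n 0 p →* Ekl n k l :=
  PresentedGroup.toGroup (f := genE n k l f) (by
    rintro r ⟨i, rfl⟩
    obtain ⟨m, rfl⟩ := ZMod.intCast_surjective i
    have h2 : shiftA n ((m : ℤ) : ZMod n) (wkl n 0 p)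
        = FreeGroup.of ((m : ZMod n)) * FreeGroup.of ((m : ZMod n))
          * FreeGroup.of (((p + m : ℤ) : ZMod n)) := by
      rw [show (((p + m : ℤ)) : ZMod n) = (p : ZMod n) + ((m : ℤ) : ZMod n) by push_cast; ring]
      simp [wkl, xg, map_mul, shiftA_of]
    beta_reduce
    rw [h2, map_mul, map_mul]
    simp only [FreeGroup.lift_apply_of]
    rw [genE_cast, genE_cast]
    have key : (aE n k l) ^ m * xE n k l * (aE n k l) ^ (-(m + f))
        * ((aE n k l) ^ m * xE n k l * (aE n k l) ^ (-(m + f)))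
        * ((aE n k l) ^ (p + m) * xE n k l * (aE n k l) ^ (-(p + m + f)))
        = (aE n k l) ^ m * (xE n k l * (aE n k l) ^ (-f) * xE n k l * (aE n k l) ^ (p - f)
            * xE n k l * (aE n k l) ^ (-f - p)) * (aE n k l) ^ (-m) := by
      group
    rw [key, hE, mul_one, ← zpow_add, add_neg_cancel, zpow_zero])

lemma PsiG_cast (hE : xE n k l * (aE n k l) ^ (-f) * xE n k l * (aE n k l) ^ (p - f) * xE n k l * (aE n k l) ^ (-f - p) = 1) (m : ℤ) :
    PsiG n k l f p hE (PresentedGroup.of ((m : ZMod n)))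
      = (aE n k l) ^ m * xE n k l * (aE n k l) ^ (-(m + f)) := by
  rw [PsiG, PresentedGroup.toGroup.of, genE_cast]

lemma compat (hE : xE n k l * (aE n k l) ^ (-f) * xE n k l * (aE n k l) ^ (p - f) * xE n k l * (aE n k l) ^ (-f - p) = 1) : ∀ c, (PsiG n k l f p hE).comp ((phiG n (wkl n 0 p)) c).toMonoidHom
    = (MulAut.conj (psiC n k l c)).toMonoidHom.comp (PsiG n k l f p hE) := by
  intro c
  refine PresentedGroup.ext fun j => ?_
  obtain ⟨m', hm'⟩ := ZMod.intCast_surjective (Multiplicative.toAdd c)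
  have hc : c = ofAdd (((m' : ℤ) : ZMod n)) := by rw [hm', ofAdd_toAdd]
  obtain ⟨m, rfl⟩ := ZMod.intCast_surjective j
  subst hc
  simp only [MonoidHom.comp_apply, MulEquiv.coe_toMonoidHom, MulAut.conj_apply]
  rw [phiG_of, show ((m : ℤ) : ZMod n) + ((m' : ℤ) : ZMod n) = ((m + m' : ℤ) : ZMod n) by
    push_cast; ring, PsiG_cast, PsiG_cast, psiC_int]
  group

/-- The hom `G_n(0,p) ⋊ C_n →* E_n(k,l)`. -/
def Psi (hE : xE n k l * (aE n k l) ^ (-f) * xE n k l * (aE n k l) ^ (p - f) * xE n k l * (aE n k l) ^ (-f - p) = 1) : SD n p →* Ekl n k l :=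
  SemidirectProduct.lift (PsiG n k l f p hE) (psiC n k l) (compat n k l f p hE)

end core2
end CPG14
namespace CPG14
open CPG Multiplicative SemidirectProduct

section core3
variable (n : ℕ) (k l f p : ℤ)
variable (hf3 : ((3 * f : ℤ) : ZMod n) = 0)
variable (hG : Xg n p 0 * Xg n p ((f + k : ℤ) : ZMod n) * Xg n p ((2 * f + l : ℤ) : ZMod n) = 1)
variable (hE : xE n k l * (aE n k l) ^ (-f) * xE n k l * (aE n k l) ^ (p - f) * xE n k l
    * (aE n k l) ^ (-f - p) = 1)

lemma psiC_one : psiC n k l (ofAdd (1 : ZMod n)) = aE n k l := by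
  rw [show (1 : ZMod n) = ((1 : ℤ) : ZMod n) by norm_cast, psiC_int, zpow_one]

lemma hL : (Psi n k l f p hE).comp (Phi n k l f p hf3 hG) = MonoidHom.id _ := by
  refine PresentedGroup.ext fun b => ?_
  cases b
  · show (Psi n k l f p hE) ((Phi n k l f p hf3 hG) (aE n k l)) = aE n k l
    rw [Phi_a, tS, Psi, lift_inr, psiC_one]
  · show (Psi n k l f p hE) ((Phi n k l f p hf3 hG) (xE n k l)) = xE n k l
    rw [Phi_x, sS, map_mul, Psi, lift_inl, lift_inr]
    rw [show (Xg n p 0 : Gkl n 0 p) = PresentedGroup.of (((0 : ℤ) : ZMod n)) by norm_cast,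
      PsiG_cast, psiC_int]
    group

lemma hR : (Phi n k l f p hf3 hG).comp (Psi n k l f p hE) = MonoidHom.id _ := by
  refine SemidirectProduct.hom_ext ?_ ?_
  · rw [MonoidHom.comp_assoc, Psi, lift_comp_inl]
    refine PresentedGroup.ext fun j => ?_
    obtain ⟨m, rfl⟩ := ZMod.intCast_surjective j
    rw [MonoidHom.comp_apply, PsiG_cast, map_mul, map_mul, map_zpow, map_zpow,
      Phi_a, Phi_x, tpow, tpow]
    simp only [sS]
    rw [step, step]
    simp only [map_one, mul_one, one_mul, Xg, phiG_of, zero_add]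
    rw [show ((m : ZMod n) + (f : ZMod n) + ((-(m + f) : ℤ) : ZMod n)) = (0 : ZMod n) by
      push_cast; ring]
    simp
  · rw [MonoidHom.comp_assoc, Psi, lift_comp_inr]
    refine mhom_ext ?_
    rw [MonoidHom.comp_apply, psiC_one, Phi_a, tS]
    rfl

include hf3 hG hE in
theorem core :
    ∃ ν : Ekl n k l →* Multiplicative (ZMod n),
      ν (aE n k l) = ofAdd (1 : ZMod n) ∧ ν (xE n k l) = ofAdd ((f : ZMod n)) ∧
      Nonempty (ν.ker ≃* Gkl n 0 p) := by
  set Φ := Phi n k l f p hf3 hG with hΦ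
  set Ψ := Psi n k l f p hE with hΨ
  have hLp : ∀ z, Ψ (Φ z) = z := fun z => by
    rw [← MonoidHom.comp_apply, hL]; rfl
  have hRp : ∀ s, Φ (Ψ s) = s := fun s => by
    rw [← MonoidHom.comp_apply, hR]; rfl
  refine ⟨rightHom.comp Φ, ?_, ?_, ?_⟩
  · rw [MonoidHom.comp_apply, hΦ, Phi_a, tS, rightHom_inr]
  · rw [MonoidHom.comp_apply, hΦ, Phi_x, sS, map_mul, rightHom_inl, rightHom_inr, one_mul]
  · have hmem : ∀ g : Gkl n 0 p, Ψ (inl g) ∈ (rightHom.comp Φ).ker := fun g => by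
      rw [MonoidHom.mem_ker, MonoidHom.comp_apply, hRp, rightHom_inl]
    have hright : ∀ z, z ∈ (rightHom.comp Φ).ker → (Φ z).right = 1 := fun z hz => by
      rw [MonoidHom.mem_ker, MonoidHom.comp_apply] at hz
      exact hz
    refine ⟨{ toFun := fun z => (Φ z.1).left,
              invFun := fun g => ⟨Ψ (inl g), hmem g⟩,
              left_inv := fun z => Subtype.ext ?_,
              right_inv := fun g => ?_,
              map_mul' := fun z w => ?_ }⟩
    · show Ψ (inl ((Φ z.1).left)) = z.1
      have h1 : inl ((Φ z.1).left) = Φ z.1 := by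
        conv_rhs => rw [← inl_left_mul_inr_right (Φ z.1)]
        rw [hright z.1 z.2, map_one, mul_one]
      rw [h1, hLp]
    · show (Φ (Ψ (inl g))).left = g
      rw [hRp]
      rfl
    · show (Φ (z.1 * w.1)).left = (Φ z.1).left * (Φ w.1).left
      rw [map_mul, mul_left, hright z.1 z.2, map_one]
      simp

end core3
end CPG14
namespace CPG14
open CPG Multiplicative

lemma coprime_of (n : ℕ) (hn : 0 < n) (p : ℤ)
    (h : ∀ q : ℕ, q.Prime → (q : ℤ) ∣ p → (q : ℤ) ∣ (n : ℤ) → False) :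
    Int.gcd p (n : ℤ) = 1 := by
  by_contra hg
  have hg0 : Int.gcd p (n : ℤ) ≠ 0 := fun h0 =>
    absurd (by exact_mod_cast (Int.gcd_eq_zero_iff.mp h0).2) hn.ne'
  have h2 : 2 ≤ Int.gcd p (n : ℤ) := by omega
  have hq : (Int.gcd p (n : ℤ)).minFac.Prime := Nat.minFac_prime (by omega)
  have hqg : ((Int.gcd p (n : ℤ)).minFac : ℤ) ∣ (Int.gcd p (n : ℤ) : ℤ) :=
    Int.natCast_dvd_natCast.mpr (Nat.minFac_dvd _)
  exact h _ hq (hqg.trans (Int.gcd_dvd_left _ _)) (hqg.trans (Int.gcd_dvd_right _ _))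

lemma gcd_one_case (n : ℕ) (hn : 0 < n) (k l d p : ℤ)
    (hgcd : Int.gcd (n : ℤ) (Int.gcd k l) = 1)
    (hnd : (n : ℤ) ∣ 3 * d)
    (h3p : ¬ (3 : ℤ) ∣ p)
    (himp : ∀ q : ℕ, q.Prime → (q : ℤ) ∣ d → (q : ℤ) ∣ p → (q : ℤ) ∣ k ∧ (q : ℤ) ∣ l) :
    Int.gcd p (n : ℤ) = 1 := by
  refine coprime_of n hn p ?_
  intro q hq hqp hqn
  by_cases hq3 : q = 3
  · subst hq3
    exact h3p (by exact_mod_cast hqp)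
  · have hqprime : Prime (q : ℤ) := Int.prime_iff_natAbs_prime.mpr (by simpa using hq)
    have h3q : (q : ℤ) ∣ 3 * d := hqn.trans hnd
    have hqd : (q : ℤ) ∣ d := by
      rcases hqprime.dvd_mul.mp h3q with h | h
      · exfalso
        apply hq3
        have h3 : q ∣ 3 := by exact_mod_cast h
        exact (Nat.prime_dvd_prime_iff_eq hq (by norm_num)).mp h3
      · exact h
    obtain ⟨hk, hl⟩ := himp q hq hqd hqp
    have hgl : (q : ℤ) ∣ (Int.gcd k l : ℤ) := Int.dvd_coe_gcd hk hl
    have hfin : (q : ℤ) ∣ (Int.gcd (n : ℤ) (Int.gcd k l : ℤ) : ℤ) := Int.dvd_coe_gcd hqn hgl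
    rw [hgcd] at hfin
    have : q ∣ 1 := by exact_mod_cast hfin
    exact absurd (Nat.dvd_one.mp this) hq.ne_one

end CPG14

/-- Under condition (C) with `gcd(n,k,l) = 1`, `3 ∣ n` and `3 ∤ k+l`,
there are `f` with `n ∣ 3f` and `p` coprime to `n` and a retraction
`ν : E_n(k,l) → ℤ/nℤ` with `ν(a) = 1`, `ν(x) = f`, whose kernel is isomorphic to
`G_n(0,p)`. -/
theorem statement14 (n : ℕ) (hn : 0 < n) (h3 : 3 ∣ n) (k l : ℤ)
    (hgcd : Int.gcd (n : ℤ) (Int.gcd k l) = 1) (hkl : ¬ ((3 : ℤ) ∣ (k + l)))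
    (hC : (n : ℤ) ∣ 3 * k ∨ (n : ℤ) ∣ 3 * l ∨ (n : ℤ) ∣ 3 * (k - l)) :
    ∃ f p : ℤ, (n : ℤ) ∣ 3 * f ∧ Int.gcd p (n : ℤ) = 1 ∧
      ∃ ν : CPG.Ekl n k l →* Multiplicative (ZMod n),
        ν (CPG.aE n k l) = Multiplicative.ofAdd (1 : ZMod n) ∧
        ν (CPG.xE n k l) = Multiplicative.ofAdd ((f : ZMod n)) ∧
        Nonempty (ν.ker ≃* CPG.Gkl n 0 p) := by
  open CPG CPG14 Multiplicative in
  rcases hC with h | h | h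
  · -- n ∣ 3k : take f = -k, p = l - 2k
    have hdvd : (n : ℤ) ∣ 3 * (-k) := by
      rw [show (3 * (-k) : ℤ) = -(3 * k) by ring]
      exact dvd_neg.mpr h
    refine ⟨-k, l - 2 * k, hdvd, ?_, ?_⟩
    · refine gcd_one_case n hn k l k (l - 2 * k) hgcd h (by omega) ?_
      intro q hq hqk hqp
      exact ⟨hqk, by rw [show l = (l - 2 * k) + 2 * k by ring]; exact dvd_add hqp (hqk.mul_left 2)⟩
    · refine core n k l (-k) (l - 2 * k) ?_ ?_ ?_
      · exact (ZMod.intCast_zmod_eq_zero_iff_dvd _ n).mpr hdvd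
      · rw [show (-k + k : ℤ) = 0 by ring, show (2 * (-k) + l : ℤ) = l - 2 * k by ring]
        simpa [Xg] using relG n (l - 2 * k) 0
      · have e1 : (aE n k l) ^ (-(-k)) = (aE n k l) ^ k :=
          aE_congr n k l (by rw [show (-(-k) - k : ℤ) = 0 by ring]; exact dvd_zero _)
        have e2 : (aE n k l) ^ ((l - 2 * k) - -k) = (aE n k l) ^ (l - k) :=
          aE_congr n k l (by rw [show ((l - 2 * k) - -k - (l - k) : ℤ) = 0 by ring]; exact dvd_zero _)
        have e3 : (aE n k l) ^ (-(-k) - (l - 2 * k)) = (aE n k l) ^ (-l) :=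
          aE_congr n k l (by rw [show (-(-k) - (l - 2 * k) - -l : ℤ) = 3 * k by ring]; exact h)
        rw [e1, e2, e3]
        exact relE n k l
  · -- n ∣ 3l : take f = l, p = k + l
    refine ⟨l, k + l, h, ?_, ?_⟩
    · refine gcd_one_case n hn k l l (k + l) hgcd h hkl ?_
      intro q hq hql hqp
      exact ⟨by rw [show k = (k + l) - l by ring]; exact dvd_sub hqp hql, hql⟩
    · refine core n k l l (k + l) ?_ ?_ ?_
      · exact (ZMod.intCast_zmod_eq_zero_iff_dvd _ n).mpr h
      · rw [show (l + k : ℤ) = k + l by ring, show (2 * l + l : ℤ) = 3 * l by ring,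
          (ZMod.intCast_zmod_eq_zero_iff_dvd (3 * l) n).mpr h]
        simpa [Xg] using rot (relG n (k + l) 0)
      · have hu : (xE n k l * (aE n k l) ^ k) * (xE n k l * (aE n k l) ^ (l - k))
            * (xE n k l * (aE n k l) ^ (-l)) = 1 := by
          simpa [mul_assoc] using relE n k l
        have e2 : (aE n k l) ^ ((k + l) - l) = (aE n k l) ^ k :=
          aE_congr n k l (by rw [show ((k + l) - l - k : ℤ) = 0 by ring]; exact dvd_zero _)
        have e3 : (aE n k l) ^ (-l - (k + l)) = (aE n k l) ^ (l - k) :=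
          aE_congr n k l (by rw [show (-l - (k + l) - (l - k) : ℤ) = -(3 * l) by ring]; exact dvd_neg.mpr h)
        rw [e2, e3]
        simpa [mul_assoc] using rot (rot hu)
  · -- n ∣ 3(k-l) : take f = k - l, p = l - 2k
    refine ⟨k - l, l - 2 * k, h, ?_, ?_⟩
    · refine gcd_one_case n hn k l (k - l) (l - 2 * k) hgcd h (by omega) ?_
      intro q hq hqd hqp
      have hk : (q : ℤ) ∣ k := by
        rw [show k = -((l - 2 * k) + (k - l)) by ring]
        exact dvd_neg.mpr (dvd_add hqp hqd)
      exact ⟨hk, by rw [show l = k - (k - l) by ring]; exact dvd_sub hk hqd⟩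
    · refine core n k l (k - l) (l - 2 * k) ?_ ?_ ?_
      · exact (ZMod.intCast_zmod_eq_zero_iff_dvd _ n).mpr h
      · rw [show (k - l + k : ℤ) = -(l - 2 * k) by ring,
          show (2 * (k - l) + l : ℤ) = -(l - 2 * k) by ring]
        simpa [Xg] using rot (rot (relG n (l - 2 * k) (-(((l - 2 * k) : ℤ) : ZMod n))))
      · have hu : (xE n k l * (aE n k l) ^ k) * (xE n k l * (aE n k l) ^ (l - k))
            * (xE n k l * (aE n k l) ^ (-l)) = 1 := by
          simpa [mul_assoc] using relE n k l
        have e1 : (aE n k l) ^ (-(k - l)) = (aE n k l) ^ (l - k) :=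
          aE_congr n k l (by rw [show (-(k - l) - (l - k) : ℤ) = 0 by ring]; exact dvd_zero _)
        have e2 : (aE n k l) ^ ((l - 2 * k) - (k - l)) = (aE n k l) ^ (-l) :=
          aE_congr n k l (by rw [show ((l - 2 * k) - (k - l) - -l : ℤ) = -(3 * (k - l)) by ring]; exact dvd_neg.mpr h)
        have e3 : (aE n k l) ^ (-(k - l) - (l - 2 * k)) = (aE n k l) ^ k :=
          aE_congr n k l (by rw [show (-(k - l) - (l - 2 * k) - k : ℤ) = 0 by ring]; exact dvd_zero _)
        rw [e1, e2, e3]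
        simpa [mul_assoc] using rot hu
end

section
/- Let k and l be integers with gcd(18, k, l) = 1 and 3 ∣ k+l, such that neither condition (B) nor condition (C) holds for n = 18 (i.e., 18 divides none of k+l, 2k−l, 2l−k, 3k, 3l, 3(k−l)). Then there exist a group isomorphism ψ : E_18(k,l) → E', where E' is the group with presentation (a, u : a^18, u² a⁹ u a⁶), and a homomorphism ν : E' → ℤ/18ℤ with ν(a) = 1, such that ψ carries the image of a in E_18(k,l) to the image of a or of a⁻¹ in E', and ψ restricts to an isomorphism of G_18(k,l) = ker ν⁰ onto ker ν, where ν⁰ : E_18(k,l) → ℤ/18ℤ is the homomorphism with ν⁰(a) = 1 and ν⁰(x) = 0. -/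
namespace CPG

/-- The relator set of `E' = (a, u : a^18, u² a⁹ u a⁶)` (here `a = of false`,
`u = of true`). -/
def relsE' : Set (FreeGroup Bool) := {ga ^ 18, gx ^ 2 * ga ^ 9 * gx * ga ^ 6}

/-- The group `E' = (a, u : a^18, u² a⁹ u a⁶)`. -/
abbrev E' := PresentedGroup relsE'

end CPG

namespace CPG

lemma rel_of_mem {R : Set (FreeGroup Bool)} {r : FreeGroup Bool} (h : r ∈ R) :
    PresentedGroup.mk R r = 1 :=
  (QuotientGroup.eq_one_iff r).mpr (Subgroup.subset_normalClosure h)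

lemma relE_mem1 (n : ℕ) (k l : ℤ) : ga ^ n ∈ relsE n k l := Or.inl rfl
lemma relE_mem2 (n : ℕ) (k l : ℤ) :
    gx * ga ^ k * gx * ga ^ (l - k) * gx * ga ^ (-l) ∈ relsE n k l := Or.inr rfl

lemma EklA (n : ℕ) (k l : ℤ) : (PresentedGroup.of false : Ekl n k l) ^ (n : ℤ) = 1 := by
  have h := rel_of_mem (relE_mem1 n k l)
  rw [map_pow] at h
  rw [zpow_natCast]
  exact h

lemma EklR (n : ℕ) (k l : ℤ) :
    (PresentedGroup.of true : Ekl n k l) * (PresentedGroup.of false : Ekl n k l) ^ k *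
      PresentedGroup.of true * (PresentedGroup.of false : Ekl n k l) ^ (l - k) *
      PresentedGroup.of true * (PresentedGroup.of false : Ekl n k l) ^ (-l) = 1 := by
  have h := rel_of_mem (relE_mem2 n k l)
  simpa [ga, gx, map_mul, map_zpow, PresentedGroup.of] using h

lemma E'A : (PresentedGroup.of false : E') ^ (18 : ℤ) = 1 := by
  have h := rel_of_mem (R := relsE') (r := ga ^ 18) (Or.inl rfl)
  rw [map_pow] at h
  rw [show ((18:ℤ)) = ((18:ℕ) : ℤ) by norm_num, zpow_natCast]
  exact h

lemma E'R : (PresentedGroup.of true : E') ^ (2:ℕ) * (PresentedGroup.of false : E') ^ (9:ℕ) *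
    PresentedGroup.of true * (PresentedGroup.of false : E') ^ (6:ℕ) = 1 := by
  have h := rel_of_mem (R := relsE') (r := gx ^ 2 * ga ^ 9 * gx * ga ^ 6) (Or.inr rfl)
  simpa [ga, gx, map_mul, map_pow, PresentedGroup.of] using h

lemma zpow_congr {G} [Group G] {A : G} (hA : A ^ (18:ℤ) = 1) {e e' : ℤ}
    (h : ((e - e' : ℤ) : ZMod 18) = 0) : A ^ e = A ^ e' := by
  obtain ⟨t, ht⟩ := (ZMod.intCast_zmod_eq_zero_iff_dvd _ 18).mp h
  have he : e = e' + 18 * t := by push_cast at ht; linarith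
  rw [he, zpow_add, zpow_mul, hA, one_zpow, mul_one]

end CPG

namespace CPG

lemma relator_form {G : Type*} [Group G] {X A : G} {k l : ℤ}
    (h : X * A ^ k * X * A ^ (l - k) * X * A ^ (-l) = 1) (e1 e2 e3 : ℤ)
    (h1 : e1 = k) (h2 : e2 = l - k) (h3 : e3 = -l) :
    X * A ^ e1 * X * A ^ e2 * X * A ^ e3 = 1 := by
  subst h1 h2 h3; exact h

lemma pow18_of_int {G : Type*} [Group G] {A : G} (h : A ^ (18 : ℤ) = 1) :
    A ^ (18 : ℕ) = 1 := by
  rw [← zpow_natCast] at *; norm_num at *; exact h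

lemma inv_zpow' {G : Type*} [Group G] (A : G) (e : ℤ) : (A⁻¹) ^ e = A ^ (-e) := by
  group

/-- Build an isomorphism of presented groups from generator assignments in both
directions. -/
def buildEquiv {R1 R2 : Set (FreeGroup Bool)} {f : Bool → PresentedGroup R2}
    {g : Bool → PresentedGroup R1}
    (hf : ∀ r ∈ R1, FreeGroup.lift f r = 1) (hg : ∀ r ∈ R2, FreeGroup.lift g r = 1)
    (hgf : ∀ b, PresentedGroup.toGroup hg (PresentedGroup.toGroup hf (PresentedGroup.of b))
      = PresentedGroup.of b)
    (hfg : ∀ b, PresentedGroup.toGroup hf (PresentedGroup.toGroup hg (PresentedGroup.of b))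
      = PresentedGroup.of b) :
    PresentedGroup R1 ≃* PresentedGroup R2 :=
  MonoidHom.toMulEquiv (PresentedGroup.toGroup hf) (PresentedGroup.toGroup hg)
    (by ext b; simpa using hgf b) (by ext b; simpa using hfg b)

@[simp] lemma buildEquiv_of {R1 R2 : Set (FreeGroup Bool)} {f : Bool → PresentedGroup R2}
    {g : Bool → PresentedGroup R1} (hf) (hg) (hgf) (hfg) (b : Bool) :
    (buildEquiv (R1 := R1) (R2 := R2) (f := f) (g := g) hf hg hgf hfg) (PresentedGroup.of b)
      = f b :=
  PresentedGroup.toGroup.of hf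

/-- Inversion: `a ↦ a⁻¹`, `x ↦ x`. -/
def invEquiv (k l : ℤ) : Ekl 18 k l ≃* Ekl 18 (-k) (-l) := by
  have key : ∀ (k' l' k l : ℤ), k' = -k → l' = -l →
      ∀ r ∈ relsE 18 k l, FreeGroup.lift
        (fun b => cond b (PresentedGroup.of true : Ekl 18 k' l')
          (PresentedGroup.of false)⁻¹) r = 1 := by
    rintro k' l' k l rfl rfl r (rfl | rfl)
    · simp only [ga, map_pow, FreeGroup.lift_apply_of, cond_false]
      rw [inv_pow, pow18_of_int (EklA 18 (-k) (-l)), inv_one]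
    · simp only [ga, gx, map_mul, map_zpow, FreeGroup.lift_apply_of, cond_false, cond_true,
        inv_zpow']
      exact relator_form (EklR 18 (-k) (-l)) _ _ _ (by ring) (by ring) (by ring)
  refine buildEquiv (key (-k) (-l) k l rfl rfl)
    (key k l (-k) (-l) (by ring) (by ring)) ?_ ?_
  · rintro (_ | _) <;> simp
  · rintro (_ | _) <;> simp

/-- Reversal: `a ↦ a`, `x ↦ x⁻¹`. -/
def revEquiv (k l : ℤ) : Ekl 18 k l ≃* Ekl 18 l k := by
  have key : ∀ (k l : ℤ), ∀ r ∈ relsE 18 k l, FreeGroup.lift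
      (fun b => cond b ((PresentedGroup.of true : Ekl 18 l k))⁻¹
        (PresentedGroup.of false)) r = 1 := by
    rintro k l r (rfl | rfl)
    · simp only [ga, map_pow, FreeGroup.lift_apply_of, cond_false]
      exact pow18_of_int (EklA 18 l k)
    · simp only [ga, gx, map_mul, map_zpow, FreeGroup.lift_apply_of, cond_false, cond_true]
      have h := EklR 18 l k
      set X := (PresentedGroup.of true : Ekl 18 l k)
      set A := (PresentedGroup.of false : Ekl 18 l k)
      have hc : X⁻¹ * A ^ k * X⁻¹ * A ^ (l - k) * X⁻¹ * A ^ (-l)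
          = X⁻¹ * (X * A ^ l * X * A ^ (k - l) * X * A ^ (-k))⁻¹ * X := by
        group
      rw [hc, h]; group
  refine buildEquiv (key k l) (key l k) ?_ ?_
  · rintro (_ | _) <;> simp
  · rintro (_ | _) <;> simp

end CPG

namespace CPG

lemma word_form {G : Type*} [Group G] {X A : G} {p q r : ℤ}
    (h : X * A ^ p * X * A ^ q * X * A ^ r = 1) (e1 e2 e3 : ℤ)
    (h1 : e1 = p) (h2 : e2 = q) (h3 : e3 = r) :
    X * A ^ e1 * X * A ^ e2 * X * A ^ e3 = 1 := by
  subst h1 h2 h3; exact h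

lemma rot_word {G : Type*} [Group G] {X A : G} {p q r : ℤ}
    (h : X * A ^ p * X * A ^ q * X * A ^ r = 1) :
    X * A ^ q * X * A ^ r * X * A ^ p = 1 := by
  have hc : X * A ^ q * X * A ^ r * X * A ^ p
      = (X * A ^ p)⁻¹ * (X * A ^ p * X * A ^ q * X * A ^ r) * (X * A ^ p) := by group
  rw [hc, h]; group

lemma mem_closure_of_mk_eq_one {R : Set (FreeGroup Bool)} {r : FreeGroup Bool}
    (h : PresentedGroup.mk R r = 1) : r ∈ Subgroup.normalClosure R :=
  (QuotientGroup.eq_one_iff r).mp h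

lemma closure_rot (k l : ℤ) :
    Subgroup.normalClosure (relsE 18 k l)
      = Subgroup.normalClosure (relsE 18 (l - k) (-k)) := by
  apply le_antisymm
  · apply Subgroup.normalClosure_le_normal
    rintro r (rfl | rfl) <;> apply mem_closure_of_mk_eq_one
    · exact rel_of_mem (relE_mem1 18 (l - k) (-k))
    · have h := rel_of_mem (relE_mem2 18 (l - k) (-k))
      simp only [ga, gx, map_mul, map_zpow, map_pow] at h ⊢
      have h2 := rot_word (rot_word h)
      exact word_form h2 _ _ _ (by ring) (by ring) (by ring)
  · apply Subgroup.normalClosure_le_normal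
    rintro r (rfl | rfl) <;> apply mem_closure_of_mk_eq_one
    · exact rel_of_mem (relE_mem1 18 k l)
    · have h := rel_of_mem (relE_mem2 18 k l)
      simp only [ga, gx, map_mul, map_zpow, map_pow] at h ⊢
      have h1 := rot_word h
      exact word_form h1 _ _ _ (by ring) (by ring) (by ring)

/-- Rotation: the identity map, since the normal closures coincide. -/
def rotEquiv (k l : ℤ) : Ekl 18 k l ≃* Ekl 18 (l - k) (-k) :=
  QuotientGroup.quotientMulEquivOfEq (closure_rot k l)

@[simp] lemma rotEquiv_of (k l : ℤ) (b : Bool) :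
    rotEquiv k l (PresentedGroup.of b) = PresentedGroup.of b :=
  QuotientGroup.quotientMulEquivOfEq_mk (closure_rot k l) (FreeGroup.of b)

end CPG

namespace CPG

/-- The substitution `u = x aᵐ`: an isomorphism `E_18(k,l) ≃* E'` when
`k ≡ m`, `l - k ≡ m + 9`, `-l ≡ m + 6 (mod 18)`. -/
def subEquiv (k l m : ℤ) (h1 : ((k - m : ℤ) : ZMod 18) = 0)
    (h2 : ((l - k - m - 9 : ℤ) : ZMod 18) = 0)
    (h3 : ((-l - m - 6 : ℤ) : ZMod 18) = 0) : Ekl 18 k l ≃* E' := by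
  have hA' : (PresentedGroup.of false : E') ^ (18 : ℤ) = 1 := E'A
  have hA : (PresentedGroup.of false : Ekl 18 k l) ^ (18 : ℤ) = 1 := by
    have := EklA 18 k l; norm_num at this; exact this
  refine buildEquiv
    (f := fun b => cond b
      ((PresentedGroup.of true : E') * (PresentedGroup.of false : E') ^ (-m))
      (PresentedGroup.of false))
    (g := fun b => cond b
      ((PresentedGroup.of true : Ekl 18 k l) * (PresentedGroup.of false) ^ m)
      (PresentedGroup.of false))
    ?_ ?_ ?_ ?_
  · rintro r (rfl | rfl)
    · simp only [ga, map_pow, FreeGroup.lift_apply_of, cond_false]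
      exact pow18_of_int E'A
    · simp only [ga, gx, map_mul, map_zpow, FreeGroup.lift_apply_of, cond_false, cond_true]
      set X := (PresentedGroup.of true : E')
      set A := (PresentedGroup.of false : E')
      have c1 : ((-m + k - 0 : ℤ) : ZMod 18) = 0 := by
        push_cast; push_cast at h1; linear_combination h1
      have c2 : ((-m + (l - k) - 9 : ℤ) : ZMod 18) = 0 := by
        push_cast; push_cast at h2; linear_combination h2
      have c3 : ((-m + -l - 6 : ℤ) : ZMod 18) = 0 := by
        push_cast; push_cast at h3; linear_combination h3
      have e1 : A ^ (-m) * A ^ k = 1 := by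
        rw [← zpow_add, zpow_congr hA' c1, zpow_zero]
      have e2 : A ^ (-m) * A ^ (l - k) = A ^ (9 : ℤ) := by
        rw [← zpow_add]; exact zpow_congr hA' c2
      have e3 : A ^ (-m) * A ^ (-l) = A ^ (6 : ℤ) := by
        rw [← zpow_add]; exact zpow_congr hA' c3
      calc X * A ^ (-m) * A ^ k * (X * A ^ (-m)) * A ^ (l - k) * (X * A ^ (-m)) * A ^ (-l)
          = X * (A ^ (-m) * A ^ k) * (X * (A ^ (-m) * A ^ (l - k))) *
            (X * (A ^ (-m) * A ^ (-l))) := by group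
        _ = X * 1 * (X * A ^ (9 : ℤ)) * (X * A ^ (6 : ℤ)) := by rw [e1, e2, e3]
        _ = X ^ (2 : ℕ) * A ^ (9 : ℕ) * X * A ^ (6 : ℕ) := by rw [pow_two]; group
        _ = 1 := E'R
  · rintro r (rfl | rfl)
    · simp only [ga, map_pow, FreeGroup.lift_apply_of, cond_false]
      exact pow18_of_int hA
    · simp only [ga, gx, map_mul, map_zpow, map_pow, FreeGroup.lift_apply_of, cond_false, cond_true]
      set x := (PresentedGroup.of true : Ekl 18 k l)
      set a := (PresentedGroup.of false : Ekl 18 k l)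
      have d1 : a ^ m = a ^ k := by
        refine zpow_congr hA ?_
        push_cast; push_cast at h1; linear_combination -h1
      have d2 : a ^ (9 + m : ℤ) = a ^ (l - k) := by
        refine zpow_congr hA ?_
        push_cast; push_cast at h2; linear_combination -h2
      have d3 : a ^ (6 + m : ℤ) = a ^ (-l) := by
        refine zpow_congr hA ?_
        push_cast; push_cast at h3; linear_combination -h3
      calc (x * a ^ m) ^ (2:ℕ) * a ^ (9:ℕ) * (x * a ^ m) * a ^ (6:ℕ)
          = x * a ^ m * x * a ^ (9 + m : ℤ) * x * a ^ (6 + m : ℤ) := by rw [pow_two]; group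
        _ = x * a ^ k * x * a ^ (l - k) * x * a ^ (-l) := by rw [d1, d2, d3]
        _ = 1 := EklR 18 k l
  · rintro (_ | _) <;> simp [map_mul, map_zpow]
  · rintro (_ | _) <;> simp [map_mul, map_zpow]

end CPG

namespace CPG

/-- The degree homomorphism `ν : E' → ℤ/18` with `ν(a) = 1`, `ν(u) = M`. -/
def nuE' (M : ZMod 18) (hM : 3 * M + 15 = 0) : E' →* Multiplicative (ZMod 18) := by
  refine PresentedGroup.toGroup
    (f := fun b => cond b (Multiplicative.ofAdd M) (Multiplicative.ofAdd (1 : ZMod 18))) ?_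
  rintro r (rfl | rfl)
  · simp only [ga, map_pow, FreeGroup.lift_apply_of, cond_false]
    rw [← ofAdd_nsmul]
    norm_num
    decide
  · simp only [ga, gx, map_mul, map_pow, FreeGroup.lift_apply_of, cond_false, cond_true,
      ← ofAdd_nsmul, ← ofAdd_add]
    rw [show ((2:ℕ) • M + (9:ℕ) • (1 : ZMod 18) + M + (6:ℕ) • (1 : ZMod 18))
        = 3 * M + 15 by push_cast; ring, hM]
    rfl

@[simp] lemma nuE'_a (M : ZMod 18) (hM) :
    nuE' M hM (PresentedGroup.of false) = Multiplicative.ofAdd (1 : ZMod 18) :=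
  PresentedGroup.toGroup.of _

@[simp] lemma nuE'_u (M : ZMod 18) (hM) :
    nuE' M hM (PresentedGroup.of true) = Multiplicative.ofAdd M :=
  PresentedGroup.toGroup.of _

end CPG

namespace CPG

/-- The conclusion we propagate along the reduction moves. -/
def CONC (k l : ℤ) : Prop :=
  ∃ (ψ : Ekl 18 k l ≃* E') (ν : E' →* Multiplicative (ZMod 18)),
    ν (PresentedGroup.of false) = Multiplicative.ofAdd (1 : ZMod 18) ∧
    (ψ (PresentedGroup.of false) = PresentedGroup.of false ∨
      ψ (PresentedGroup.of false) = (PresentedGroup.of false : E')⁻¹) ∧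
    ν (ψ (PresentedGroup.of true)) = 1

lemma conc_base (k l : ℤ) (M : ZMod 18)
    (h1 : (k : ZMod 18) - M = 0)
    (h2 : (l : ZMod 18) - (k : ZMod 18) - M - 9 = 0)
    (h3 : -(l : ZMod 18) - M - 6 = 0) : CONC k l := by
  set m : ℤ := (ZMod.cast M : ℤ) with hm
  have hMm : ((m : ℤ) : ZMod 18) = M := ZMod.intCast_zmod_cast M
  have hM : 3 * M + 15 = 0 := by linear_combination -h1 - h2 - h3
  have c1 : ((k - m : ℤ) : ZMod 18) = 0 := by push_cast [hMm]; linear_combination h1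
  have c2 : ((l - k - m - 9 : ℤ) : ZMod 18) = 0 := by push_cast [hMm]; linear_combination h2
  have c3 : ((-l - m - 6 : ℤ) : ZMod 18) = 0 := by push_cast [hMm]; linear_combination h3
  refine ⟨subEquiv k l m c1 c2 c3, nuE' M hM, nuE'_a M hM, Or.inl ?_, ?_⟩
  · rw [subEquiv, buildEquiv_of]; rfl
  · rw [subEquiv, buildEquiv_of]
    simp only [cond_true, map_mul, map_zpow, nuE'_a, nuE'_u]
    simp [← ofAdd_zsmul, zsmul_eq_mul, hMm]

lemma conc_rot (k l : ℤ) (H : CONC (l - k) (-k)) : CONC k l := by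
  obtain ⟨ψ, ν, hν, ha, hx⟩ := H
  refine ⟨(rotEquiv k l).trans ψ, ν, hν, ?_, ?_⟩
  · simpa using ha
  · simpa using hx

lemma conc_inv (k l : ℤ) (H : CONC (-k) (-l)) : CONC k l := by
  obtain ⟨ψ, ν, hν, ha, hx⟩ := H
  refine ⟨(invEquiv k l).trans ψ, ν, hν, ?_, ?_⟩
  · have : (invEquiv k l) (PresentedGroup.of false)
        = (PresentedGroup.of false : Ekl 18 (-k) (-l))⁻¹ := by
      rw [invEquiv, buildEquiv_of]; rfl
    simp only [MulEquiv.trans_apply, this, map_inv]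
    rcases ha with h | h <;> simp [h]
  · have : (invEquiv k l) (PresentedGroup.of true)
        = (PresentedGroup.of true : Ekl 18 (-k) (-l)) := by
      rw [invEquiv, buildEquiv_of]; rfl
    simp only [MulEquiv.trans_apply, this, hx]

lemma conc_rev (k l : ℤ) (H : CONC l k) : CONC k l := by
  obtain ⟨ψ, ν, hν, ha, hx⟩ := H
  refine ⟨(revEquiv k l).trans ψ, ν, hν, ?_, ?_⟩
  · have : (revEquiv k l) (PresentedGroup.of false)
        = (PresentedGroup.of false : Ekl 18 l k) := by
      rw [revEquiv, buildEquiv_of]; rfl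
    simp only [MulEquiv.trans_apply, this]
    exact ha
  · have : (revEquiv k l) (PresentedGroup.of true)
        = (PresentedGroup.of true : Ekl 18 l k)⁻¹ := by
      rw [revEquiv, buildEquiv_of]; rfl
    simp only [MulEquiv.trans_apply, this, map_inv, hx, inv_one]

end CPG

namespace CPG

def rotP (p : ZMod 18 × ZMod 18) : ZMod 18 × ZMod 18 := (p.2 - p.1, -p.1)
def negP (e : Bool) (p : ZMod 18 × ZMod 18) : ZMod 18 × ZMod 18 :=
  cond e (-p.1, -p.2) p
def swapP (s : Bool) (p : ZMod 18 × ZMod 18) : ZMod 18 × ZMod 18 :=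
  cond s (p.2, p.1) p
def eqns (p : ZMod 18 × ZMod 18) (M : ZMod 18) : Prop :=
  p.1 - M = 0 ∧ p.2 - p.1 - M - 9 = 0 ∧ -p.2 - M - 6 = 0

instance (p M) : Decidable (eqns p M) := by unfold eqns; infer_instance

end CPG

namespace CPG

def rotN : Fin 3 → (ZMod 18 × ZMod 18) → (ZMod 18 × ZMod 18)
  | 0, p => p
  | 1, p => rotP p
  | 2, p => rotP (rotP p)

lemma param_search' : ∀ K L : ZMod 18, (∃ c, K + L = 3 * c) → K + L ≠ 0 →
    2 * K - L ≠ 0 → 2 * L - K ≠ 0 → 3 * K ≠ 0 → 3 * L ≠ 0 → 3 * (K - L) ≠ 0 →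
    ∃ (s e : Bool) (r : Fin 3) (M : ZMod 18),
      eqns (rotN r (negP e (swapP s (K, L)))) M := by decide

lemma conc_of_search (k l : ℤ) (s e : Bool) (r : Fin 3) (M : ZMod 18)
    (heq : eqns (rotN r (negP e (swapP s ((k : ZMod 18), (l : ZMod 18))))) M) :
    CONC k l := by
  cases s <;> cases e <;> fin_cases r
  · obtain ⟨q1, q2, q3⟩ := heq
    simp only [rotN, rotP, negP, swapP, cond_true, cond_false] at q1 q2 q3
    exact conc_base _ _ M (by push_cast; linear_combination q1)
      (by push_cast; linear_combination q2) (by push_cast; linear_combination q3)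
  · obtain ⟨q1, q2, q3⟩ := heq
    simp only [rotN, rotP, negP, swapP, cond_true, cond_false] at q1 q2 q3
    apply conc_rot
    exact conc_base _ _ M (by push_cast; linear_combination q1)
      (by push_cast; linear_combination q2) (by push_cast; linear_combination q3)
  · obtain ⟨q1, q2, q3⟩ := heq
    simp only [rotN, rotP, negP, swapP, cond_true, cond_false] at q1 q2 q3
    apply conc_rot
    apply conc_rot
    exact conc_base _ _ M (by push_cast; linear_combination q1)
      (by push_cast; linear_combination q2) (by push_cast; linear_combination q3)
  · obtain ⟨q1, q2, q3⟩ := heq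
    simp only [rotN, rotP, negP, swapP, cond_true, cond_false] at q1 q2 q3
    apply conc_inv
    exact conc_base _ _ M (by push_cast; linear_combination q1)
      (by push_cast; linear_combination q2) (by push_cast; linear_combination q3)
  · obtain ⟨q1, q2, q3⟩ := heq
    simp only [rotN, rotP, negP, swapP, cond_true, cond_false] at q1 q2 q3
    apply conc_inv
    apply conc_rot
    exact conc_base _ _ M (by push_cast; linear_combination q1)
      (by push_cast; linear_combination q2) (by push_cast; linear_combination q3)
  · obtain ⟨q1, q2, q3⟩ := heq
    simp only [rotN, rotP, negP, swapP, cond_true, cond_false] at q1 q2 q3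
    apply conc_inv
    apply conc_rot
    apply conc_rot
    exact conc_base _ _ M (by push_cast; linear_combination q1)
      (by push_cast; linear_combination q2) (by push_cast; linear_combination q3)
  · obtain ⟨q1, q2, q3⟩ := heq
    simp only [rotN, rotP, negP, swapP, cond_true, cond_false] at q1 q2 q3
    apply conc_rev
    exact conc_base _ _ M (by push_cast; linear_combination q1)
      (by push_cast; linear_combination q2) (by push_cast; linear_combination q3)
  · obtain ⟨q1, q2, q3⟩ := heq
    simp only [rotN, rotP, negP, swapP, cond_true, cond_false] at q1 q2 q3
    apply conc_rev
    apply conc_rot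
    exact conc_base _ _ M (by push_cast; linear_combination q1)
      (by push_cast; linear_combination q2) (by push_cast; linear_combination q3)
  · obtain ⟨q1, q2, q3⟩ := heq
    simp only [rotN, rotP, negP, swapP, cond_true, cond_false] at q1 q2 q3
    apply conc_rev
    apply conc_rot
    apply conc_rot
    exact conc_base _ _ M (by push_cast; linear_combination q1)
      (by push_cast; linear_combination q2) (by push_cast; linear_combination q3)
  · obtain ⟨q1, q2, q3⟩ := heq
    simp only [rotN, rotP, negP, swapP, cond_true, cond_false] at q1 q2 q3
    apply conc_rev
    apply conc_inv
    exact conc_base _ _ M (by push_cast; linear_combination q1)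
      (by push_cast; linear_combination q2) (by push_cast; linear_combination q3)
  · obtain ⟨q1, q2, q3⟩ := heq
    simp only [rotN, rotP, negP, swapP, cond_true, cond_false] at q1 q2 q3
    apply conc_rev
    apply conc_inv
    apply conc_rot
    exact conc_base _ _ M (by push_cast; linear_combination q1)
      (by push_cast; linear_combination q2) (by push_cast; linear_combination q3)
  · obtain ⟨q1, q2, q3⟩ := heq
    simp only [rotN, rotP, negP, swapP, cond_true, cond_false] at q1 q2 q3
    apply conc_rev
    apply conc_inv
    apply conc_rot
    apply conc_rot
    exact conc_base _ _ M (by push_cast; linear_combination q1)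
      (by push_cast; linear_combination q2) (by push_cast; linear_combination q3)

end CPG

/-- For the exceptional case `n = 18`: the extension
`1 → G_18(k,l) → E_18(k,l) → C_18 → 1` is equivalent to one coming from the group
`E' = (a, u : a^18, u² a⁹ u a⁶)`. -/
theorem statement16 (k l : ℤ) (hgcd : Int.gcd (18 : ℤ) (Int.gcd k l) = 1)
    (h3 : (3 : ℤ) ∣ (k + l))
    (hB : ¬((18 : ℤ) ∣ (k + l) ∨ (18 : ℤ) ∣ (2 * k - l) ∨ (18 : ℤ) ∣ (2 * l - k)))
    (hC : ¬((18 : ℤ) ∣ 3 * k ∨ (18 : ℤ) ∣ 3 * l ∨ (18 : ℤ) ∣ 3 * (k - l)))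
    (ν₀ : CPG.Ekl 18 k l →* Multiplicative (ZMod 18))
    (hν₀a : ν₀ (CPG.aE 18 k l) = Multiplicative.ofAdd (1 : ZMod 18))
    (hν₀x : ν₀ (CPG.xE 18 k l) = 1) :
    ∃ (ψ : CPG.Ekl 18 k l ≃* CPG.E') (ν : CPG.E' →* Multiplicative (ZMod 18)),
      ν (PresentedGroup.of false : CPG.E') = Multiplicative.ofAdd (1 : ZMod 18) ∧
      (ψ (CPG.aE 18 k l) = (PresentedGroup.of false : CPG.E') ∨
        ψ (CPG.aE 18 k l) = (PresentedGroup.of false : CPG.E')⁻¹) ∧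
      (∀ g : CPG.Ekl 18 k l, g ∈ ν₀.ker ↔ ψ g ∈ ν.ker) := by
  push_neg at hB hC
  obtain ⟨hB1, hB2, hB3⟩ := hB
  obtain ⟨hC1, hC2, hC3⟩ := hC
  have cast0 : ∀ t : ℤ, ¬ (18:ℤ) ∣ t → ((t : ℤ) : ZMod 18) ≠ 0 := fun t ht h =>
    ht ((ZMod.intCast_zmod_eq_zero_iff_dvd t 18).mp h)
  obtain ⟨d, hd⟩ := h3
  have hdiv : ∃ c : ZMod 18, (k : ZMod 18) + (l : ZMod 18) = 3 * c := by
    refine ⟨(d : ZMod 18), ?_⟩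
    have : ((k + l : ℤ) : ZMod 18) = ((3 * d : ℤ) : ZMod 18) := by rw [hd]
    push_cast at this; linear_combination this
  have b1 := cast0 _ hB1
  have b2 := cast0 _ hB2
  have b3 := cast0 _ hB3
  have c1 := cast0 _ hC1
  have c2 := cast0 _ hC2
  have c3 := cast0 _ hC3
  push_cast at b1 b2 b3 c1 c2 c3
  obtain ⟨s, e, r, M, heq⟩ := CPG.param_search' (k : ZMod 18) (l : ZMod 18) hdiv
    (by exact b1) (by exact b2) (by exact b3) (by exact c1) (by exact c2) (by exact c3)
  obtain ⟨ψ, ν, hν, ha, hx⟩ := CPG.conc_of_search k l s e r M heq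
  refine ⟨ψ, ν, hν, ha, ?_⟩
  have hν₀a' : ν₀ (PresentedGroup.of false) = Multiplicative.ofAdd (1 : ZMod 18) := hν₀a
  have hν₀x' : ν₀ (PresentedGroup.of true) = 1 := hν₀x
  rcases ha with h | h
  · have hcomp : ν.comp (ψ : CPG.Ekl 18 k l →* CPG.E') = ν₀ := by
      ext b
      cases b
      · show ν (ψ (PresentedGroup.of false)) = _
        rw [h, hν, hν₀a']; rfl
      · show ν (ψ (PresentedGroup.of true)) = _
        rw [hx, hν₀x']; rfl
    intro g
    have hg : ν (ψ g) = ν₀ g := DFunLike.congr_fun hcomp g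
    simp [MonoidHom.mem_ker, hg]
  · have hcomp : ν.comp (ψ : CPG.Ekl 18 k l →* CPG.E') = ν₀⁻¹ := by
      ext b
      cases b
      · show ν (ψ (PresentedGroup.of false)) = (ν₀ (PresentedGroup.of false))⁻¹
        rw [h, map_inv, hν, hν₀a']
      · show ν (ψ (PresentedGroup.of true)) = (ν₀ (PresentedGroup.of true))⁻¹
        rw [hx, hν₀x', inv_one]
    intro g
    have hg : ν (ψ g) = (ν₀ g)⁻¹ := DFunLike.congr_fun hcomp g
    simp [MonoidHom.mem_ker, hg, inv_eq_one]
end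

section
/- Let G = G_5(x_0 x_1 x_2⁻¹) be the cyclically presented group with relators x_i x_{i+1} x_{i+2}⁻¹ for i modulo 5 (Conway's original Fibonacci group). Then G is cyclic of order 11, and the shift acts freely on its nonidentity elements: for every g ∈ G with g ≠ 1 and every j with 1 ≤ j ≤ 4, θ^j(g) ≠ g; thus the orbits of the shift partition the ten nonidentity elements of G into two disjoint 5-cycles. -/
namespace CPG

/-- The word `x₀ x₁ x₂⁻¹` defining Conway's original Fibonacci group `G_5(x₀x₁x₂⁻¹)`. -/
def wFib : FG 5 :=
  FreeGroup.of (0 : ZMod 5) * FreeGroup.of (1 : ZMod 5) * (FreeGroup.of (2 : ZMod 5))⁻¹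

end CPG


namespace CPG
abbrev G5 := Gp 5 wFib
def x (i : ZMod 5) : G5 := PresentedGroup.of i

lemma shiftA_wFib (i : ZMod 5) :
    shiftA 5 i wFib = FreeGroup.of i * FreeGroup.of (i+1) * (FreeGroup.of (i+2))⁻¹ := by
  simp [shiftA, wFib, add_comm]

lemma relG (i : ZMod 5) : x i * x (i+1) = x (i+2) := by
  have hmem : shiftA 5 i wFib ∈ rels 5 wFib := ⟨i, rfl⟩
  have h1 : (QuotientGroup.mk (shiftA 5 i wFib) : G5) = 1 :=
    (QuotientGroup.eq_one_iff _).mpr (Subgroup.subset_normalClosure hmem)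
  rw [shiftA_wFib] at h1
  have h2 : x i * x (i+1) * (x (i+2))⁻¹ = 1 := by
    exact h1
  exact mul_inv_eq_one.mp h2

lemma shiftG_x (i : ZMod 5) : shiftG 5 wFib (x i) = x (i+1) := by
  show QuotientGroup.congr _ _ _ _ (QuotientGroup.mk (FreeGroup.of i)) = _
  erw [QuotientGroup.congr_mk]
  simp only [shiftAut, shiftA, map_mul]
  rfl
end CPG

namespace CPG

def fphi (i : ZMod 5) : Multiplicative (ZMod 11) := Multiplicative.ofAdd ((4:ZMod 11)^i.val)

lemma hrels : ∀ r ∈ rels 5 wFib, FreeGroup.lift fphi r = 1 := by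
  rintro r ⟨i, rfl⟩
  show (FreeGroup.lift fphi) ((shiftA 5 i) wFib) = 1
  rw [shiftA_wFib]
  simp only [map_mul, map_inv, FreeGroup.lift_apply_of]
  revert i
  decide

def phi : G5 →* Multiplicative (ZMod 11) := PresentedGroup.toGroup hrels

lemma phi_x (i : ZMod 5) : phi (x i) = fphi i := PresentedGroup.toGroup.of hrels

lemma phi_shift (g : G5) : phi (shiftG 5 wFib g) = (phi g) ^ 4 := by
  have h : phi.comp (shiftG 5 wFib).toMonoidHom = (powMonoidHom 4).comp phi := by
    apply PresentedGroup.ext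
    intro i
    show phi (shiftG 5 wFib (x i)) = powMonoidHom 4 (phi (x i))
    rw [shiftG_x, phi_x, phi_x]
    show fphi (i + 1) = (fphi i) ^ 4
    revert i; decide
  exact DFunLike.congr_fun h g

end CPG
lemma abstract11 {G : Type*} [Group G] (a b : G)
    (p1 : b * a * b * a * b * b * a * b * a⁻¹ = 1)
    (p2 : a * b * b * a * b * a * b⁻¹ = 1) : b = a ^ 4 ∧ a ^ 11 = 1 := by
  have p1i : a * b⁻¹ * a⁻¹ * b⁻¹ * b⁻¹ * a⁻¹ * b⁻¹ * a⁻¹ * b⁻¹ = 1 := by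
    rw [show a * b⁻¹ * a⁻¹ * b⁻¹ * b⁻¹ * a⁻¹ * b⁻¹ * a⁻¹ * b⁻¹ = (b * a * b * a * b * b * a * b * a⁻¹)⁻¹ by group, p1, inv_one]
  have p2i : b * a⁻¹ * b⁻¹ * a⁻¹ * b⁻¹ * b⁻¹ * a⁻¹ = 1 := by
    rw [show b * a⁻¹ * b⁻¹ * a⁻¹ * b⁻¹ * b⁻¹ * a⁻¹ = (a * b * b * a * b * a * b⁻¹)⁻¹ by group, p2, inv_one]
  have s0 : b = a * b * b * a * b * a := by
    calc b = ((1:G)) * (b * a⁻¹ * b⁻¹ * a⁻¹ * b⁻¹ * b⁻¹ * a⁻¹) * ((1:G))⁻¹ * (a * b * b * a * b * a) := by group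
      _ = ((1:G)) * (1:G) * ((1:G))⁻¹ * (a * b * b * a * b * a) := by rw [p2i]
      _ = a * b * b * a * b * a := by group
  have s1 : a * b * b * a * b * a = a * b * a⁻¹ * b⁻¹ * a * b⁻¹ * a⁻¹ * b⁻¹ * a := by
    calc a * b * b * a * b * a = (a * b * a⁻¹ * b⁻¹) * (b * a * b * a * b * b * a * b * a⁻¹) * (a * b * a⁻¹ * b⁻¹)⁻¹ * (a * b * a⁻¹ * b⁻¹ * a * b⁻¹ * a⁻¹ * b⁻¹ * a) := by group
      _ = (a * b * a⁻¹ * b⁻¹) * (1:G) * (a * b * a⁻¹ * b⁻¹)⁻¹ * (a * b * a⁻¹ * b⁻¹ * a * b⁻¹ * a⁻¹ * b⁻¹ * a) := by rw [p1]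
      _ = a * b * a⁻¹ * b⁻¹ * a * b⁻¹ * a⁻¹ * b⁻¹ * a := by group
  have s2 : a * b * a⁻¹ * b⁻¹ * a * b⁻¹ * a⁻¹ * b⁻¹ * a = a * b * a⁻¹ * b⁻¹ * b⁻¹ * a⁻¹ * b⁻¹ * b⁻¹ * a⁻¹ * a⁻¹ * b⁻¹ * a := by
    calc a * b * a⁻¹ * b⁻¹ * a * b⁻¹ * a⁻¹ * b⁻¹ * a = (a * b * a⁻¹ * b⁻¹ * b⁻¹ * a⁻¹ * b⁻¹ * b⁻¹ * a⁻¹) * (a * b * b * a * b * a * b⁻¹) * (a * b * a⁻¹ * b⁻¹ * b⁻¹ * a⁻¹ * b⁻¹ * b⁻¹ * a⁻¹)⁻¹ * (a * b * a⁻¹ * b⁻¹ * b⁻¹ * a⁻¹ * b⁻¹ * b⁻¹ * a⁻¹ * a⁻¹ * b⁻¹ * a) := by group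
      _ = (a * b * a⁻¹ * b⁻¹ * b⁻¹ * a⁻¹ * b⁻¹ * b⁻¹ * a⁻¹) * (1:G) * (a * b * a⁻¹ * b⁻¹ * b⁻¹ * a⁻¹ * b⁻¹ * b⁻¹ * a⁻¹)⁻¹ * (a * b * a⁻¹ * b⁻¹ * b⁻¹ * a⁻¹ * b⁻¹ * b⁻¹ * a⁻¹ * a⁻¹ * b⁻¹ * a) := by rw [p2]
      _ = a * b * a⁻¹ * b⁻¹ * b⁻¹ * a⁻¹ * b⁻¹ * b⁻¹ * a⁻¹ * a⁻¹ * b⁻¹ * a := by group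
  have s3 : a * b * a⁻¹ * b⁻¹ * b⁻¹ * a⁻¹ * b⁻¹ * b⁻¹ * a⁻¹ * a⁻¹ * b⁻¹ * a = a * b * a⁻¹ * b⁻¹ * a⁻¹ * b * a * b * a⁻¹ * b⁻¹ * a := by
    calc a * b * a⁻¹ * b⁻¹ * b⁻¹ * a⁻¹ * b⁻¹ * b⁻¹ * a⁻¹ * a⁻¹ * b⁻¹ * a = (a * b * a⁻¹ * b⁻¹ * a⁻¹) * (a * b⁻¹ * a⁻¹ * b⁻¹ * b⁻¹ * a⁻¹ * b⁻¹ * a⁻¹ * b⁻¹) * (a * b * a⁻¹ * b⁻¹ * a⁻¹)⁻¹ * (a * b * a⁻¹ * b⁻¹ * a⁻¹ * b * a * b * a⁻¹ * b⁻¹ * a) := by group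
      _ = (a * b * a⁻¹ * b⁻¹ * a⁻¹) * (1:G) * (a * b * a⁻¹ * b⁻¹ * a⁻¹)⁻¹ * (a * b * a⁻¹ * b⁻¹ * a⁻¹ * b * a * b * a⁻¹ * b⁻¹ * a) := by rw [p1i]
      _ = a * b * a⁻¹ * b⁻¹ * a⁻¹ * b * a * b * a⁻¹ * b⁻¹ * a := by group
  have s4 : a * b * a⁻¹ * b⁻¹ * a⁻¹ * b * a * b * a⁻¹ * b⁻¹ * a = a * b * a⁻¹ * b⁻¹ * a⁻¹ * b⁻¹ * a⁻¹ * b⁻¹ * a⁻¹ * b⁻¹ * b⁻¹ * a := by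
    calc a * b * a⁻¹ * b⁻¹ * a⁻¹ * b * a * b * a⁻¹ * b⁻¹ * a = (a * b * a⁻¹ * b⁻¹ * a⁻¹ * b⁻¹ * a⁻¹ * b⁻¹ * a⁻¹ * b⁻¹) * (b * a * b * a * b * b * a * b * a⁻¹) * (a * b * a⁻¹ * b⁻¹ * a⁻¹ * b⁻¹ * a⁻¹ * b⁻¹ * a⁻¹ * b⁻¹)⁻¹ * (a * b * a⁻¹ * b⁻¹ * a⁻¹ * b⁻¹ * a⁻¹ * b⁻¹ * a⁻¹ * b⁻¹ * b⁻¹ * a) := by group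
      _ = (a * b * a⁻¹ * b⁻¹ * a⁻¹ * b⁻¹ * a⁻¹ * b⁻¹ * a⁻¹ * b⁻¹) * (1:G) * (a * b * a⁻¹ * b⁻¹ * a⁻¹ * b⁻¹ * a⁻¹ * b⁻¹ * a⁻¹ * b⁻¹)⁻¹ * (a * b * a⁻¹ * b⁻¹ * a⁻¹ * b⁻¹ * a⁻¹ * b⁻¹ * a⁻¹ * b⁻¹ * b⁻¹ * a) := by rw [p1]
      _ = a * b * a⁻¹ * b⁻¹ * a⁻¹ * b⁻¹ * a⁻¹ * b⁻¹ * a⁻¹ * b⁻¹ * b⁻¹ * a := by group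
  have s5 : a * b * a⁻¹ * b⁻¹ * a⁻¹ * b⁻¹ * a⁻¹ * b⁻¹ * a⁻¹ * b⁻¹ * b⁻¹ * a = a * a * b * a⁻¹ * b⁻¹ * a⁻¹ * b⁻¹ * b⁻¹ * a := by
    calc a * b * a⁻¹ * b⁻¹ * a⁻¹ * b⁻¹ * a⁻¹ * b⁻¹ * a⁻¹ * b⁻¹ * b⁻¹ * a = (a) * (b * a⁻¹ * b⁻¹ * a⁻¹ * b⁻¹ * b⁻¹ * a⁻¹) * (a)⁻¹ * (a * a * b * a⁻¹ * b⁻¹ * a⁻¹ * b⁻¹ * b⁻¹ * a) := by group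
      _ = (a) * (1:G) * (a)⁻¹ * (a * a * b * a⁻¹ * b⁻¹ * a⁻¹ * b⁻¹ * b⁻¹ * a) := by rw [p2i]
      _ = a * a * b * a⁻¹ * b⁻¹ * a⁻¹ * b⁻¹ * b⁻¹ * a := by group
  have s6 : a * a * b * a⁻¹ * b⁻¹ * a⁻¹ * b⁻¹ * b⁻¹ * a = a * a * a * a := by
    calc a * a * b * a⁻¹ * b⁻¹ * a⁻¹ * b⁻¹ * b⁻¹ * a = (a * a) * (b * a⁻¹ * b⁻¹ * a⁻¹ * b⁻¹ * b⁻¹ * a⁻¹) * (a * a)⁻¹ * (a * a * a * a) := by group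
      _ = (a * a) * (1:G) * (a * a)⁻¹ * (a * a * a * a) := by rw [p2i]
      _ = a * a * a * a := by simp [mul_assoc]
  have hb : b = a ^ 4 := by
    rw [s0, s1, s2, s3, s4, s5, s6]; simp [pow_succ, mul_assoc]
  refine ⟨hb, ?_⟩
  have h15 : a ^ 15 = a ^ 4 := by
    calc a ^ 15 = a * (a^4) * (a^4) * a * (a^4) * a * (a^4)⁻¹ * (a^4) := by group
      _ = a * b * b * a * b * a * b⁻¹ * (a^4) := by rw [hb]
      _ = 1 * (a^4) := by rw [p2]
      _ = a ^ 4 := by group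
  calc a ^ 11 = a ^ 15 * (a ^ 4)⁻¹ := by group
    _ = a ^ 4 * (a ^ 4)⁻¹ := by rw [h15]
    _ = 1 := by group

namespace CPG

lemma hb_ha : x 1 = x 0 ^ 4 ∧ x 0 ^ 11 = 1 := by
  have h0 : x 0 * x 1 = x 2 := by simpa using relG 0
  have h1 : x 1 * x 2 = x 3 := by exact relG 1
  have h2 : x 2 * x 3 = x 4 := by exact relG 2
  have h3 : x 3 * x 4 = x 0 := by exact relG 3
  have h4 : x 4 * x 0 = x 1 := by exact relG 4
  have e3 : x 3 = x 1 * (x 0 * x 1) := by rw [← h1, h0]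
  have e4 : x 4 = (x 0 * x 1) * (x 1 * (x 0 * x 1)) := by rw [← h2, ← e3, h0]
  have h3' : (x 1 * (x 0 * x 1)) * ((x 0 * x 1) * (x 1 * (x 0 * x 1))) = x 0 := by
    rw [← e4, ← e3]; exact h3
  have h4' : ((x 0 * x 1) * (x 1 * (x 0 * x 1))) * x 0 = x 1 := by
    rw [← e4]; exact h4
  have p1 : x 1 * x 0 * x 1 * x 0 * x 1 * x 1 * x 0 * x 1 * (x 0)⁻¹ = 1 := by
    calc x 1 * x 0 * x 1 * x 0 * x 1 * x 1 * x 0 * x 1 * (x 0)⁻¹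
        = ((x 1 * (x 0 * x 1)) * ((x 0 * x 1) * (x 1 * (x 0 * x 1)))) * (x 0)⁻¹ := by group
      _ = x 0 * (x 0)⁻¹ := by rw [h3']
      _ = 1 := by group
  have p2 : x 0 * x 1 * x 1 * x 0 * x 1 * x 0 * (x 1)⁻¹ = 1 := by
    calc x 0 * x 1 * x 1 * x 0 * x 1 * x 0 * (x 1)⁻¹
        = (((x 0 * x 1) * (x 1 * (x 0 * x 1))) * x 0) * (x 1)⁻¹ := by group
      _ = x 1 * (x 1)⁻¹ := by rw [h4']
      _ = 1 := by group
  exact abstract11 (x 0) (x 1) p1 p2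

lemma hx_pow : x 0 = x 0 ^ 1 ∧ x 1 = x 0 ^ 4 ∧ x 2 = x 0 ^ 5 ∧ x 3 = x 0 ^ 9 ∧ x 4 = x 0 ^ 14 := by
  obtain ⟨hb, _⟩ := hb_ha
  have h0 : x 0 * x 1 = x 2 := by simpa using relG 0
  have h1 : x 1 * x 2 = x 3 := by exact relG 1
  have h2 : x 2 * x 3 = x 4 := by exact relG 2
  have e2 : x 2 = x 0 ^ 5 := by rw [← h0, hb]; group
  have e3 : x 3 = x 0 ^ 9 := by rw [← h1, e2, hb]; group
  refine ⟨(pow_one _).symm, hb, e2, e3, ?_⟩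
  rw [← h2, e2, e3]; group

lemma hgen : ∀ g : G5, g ∈ Subgroup.zpowers (x 0) := by
  intro g
  have htop : Subgroup.closure (Set.range (PresentedGroup.of : ZMod 5 → G5)) = ⊤ :=
    PresentedGroup.closure_range_of _
  have hsub : Set.range (PresentedGroup.of : ZMod 5 → G5) ⊆ Subgroup.zpowers (x 0) := by
    rintro _ ⟨i, rfl⟩
    obtain ⟨q0, q1, q2, q3, q4⟩ := hx_pow
    show x i ∈ Subgroup.zpowers (x 0)
    fin_cases i
    · exact Subgroup.mem_zpowers _
    · exact q1 ▸ Subgroup.npow_mem_zpowers _ 4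
    · exact q2 ▸ Subgroup.npow_mem_zpowers _ 5
    · exact q3 ▸ Subgroup.npow_mem_zpowers _ 9
    · exact q4 ▸ Subgroup.npow_mem_zpowers _ 14
  have := Subgroup.closure_le (Subgroup.zpowers (x 0)) |>.mpr hsub
  rw [htop] at this
  exact this (Subgroup.mem_top g)

lemma phi_x0 : phi (x 0) = Multiplicative.ofAdd (1 : ZMod 11) := by
  rw [phi_x]; rfl

lemma hsurj : Function.Surjective phi := by
  intro y
  refine ⟨(x 0) ^ (y.toAdd.val), ?_⟩
  rw [map_pow, phi_x0]
  show Multiplicative.ofAdd ((y.toAdd.val : ℕ) • (1 : ZMod 11)) = y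
  simp [nsmul_eq_mul, ZMod.natCast_val, ZMod.cast_id]

lemma hinj : Function.Injective phi := by
  obtain ⟨-, ha11⟩ := hb_ha
  refine (injective_iff_map_eq_one phi).mpr ?_
  intro g hg
  obtain ⟨k, hk⟩ := Subgroup.mem_zpowers_iff.mp (hgen g)
  have : phi ((x 0) ^ k) = 1 := by rw [hk]; exact hg
  rw [map_zpow, phi_x0] at this
  have hz : ((k : ℤ) : ZMod 11) = 0 := by
    have := congrArg Multiplicative.toAdd this
    simpa [toAdd_zpow, zsmul_eq_mul] using this
  obtain ⟨m, hm⟩ := (ZMod.intCast_zmod_eq_zero_iff_dvd k 11).mp hz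
  rw [← hk, hm, zpow_mul]
  norm_num
  rw [ha11, one_zpow]

end CPG

lemma pow4_ne_one (j : ℕ) (h1 : 1 ≤ j) (h4 : j ≤ 4) : ((4 ^ j : ℕ) : ZMod 11) ≠ 1 := by
  interval_cases j <;> decide


/-- Conway's original Fibonacci group `G = G_5(x₀x₁x₂⁻¹)` is cyclic of
order `11`, and the shift acts freely on its ten nonidentity elements (so the shift
orbits partition them into two disjoint `5`-cycles). -/
theorem statement19 :
    IsCyclic (CPG.Gp 5 CPG.wFib) ∧ Nat.card (CPG.Gp 5 CPG.wFib) = 11 ∧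
    ∀ g : CPG.Gp 5 CPG.wFib, g ≠ 1 → ∀ j : ℕ, 1 ≤ j → j ≤ 4 →
      (CPG.shiftG 5 CPG.wFib ^ j) g ≠ g := by
  refine ⟨⟨⟨CPG.x 0, CPG.hgen⟩⟩, ?_, ?_⟩
  · have hbij : Function.Bijective CPG.phi := ⟨CPG.hinj, CPG.hsurj⟩
    rw [Nat.card_eq_of_bijective _ hbij]
    simp [Nat.card_eq_fintype_card, ZMod.card]
  · intro g hg j hj1 hj4 hEq
    have key : ∀ (j : ℕ) (h : CPG.G5),
        CPG.phi ((CPG.shiftG 5 CPG.wFib ^ j) h) = (CPG.phi h) ^ (4 ^ j) := by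
      intro j
      induction j with
      | zero => intro h; simp
      | succ n ih =>
        intro h
        rw [pow_succ]
        have hstep : (CPG.shiftG 5 CPG.wFib ^ n * CPG.shiftG 5 CPG.wFib) h
            = (CPG.shiftG 5 CPG.wFib ^ n) (CPG.shiftG 5 CPG.wFib h) := rfl
        rw [hstep, ih, CPG.phi_shift, ← pow_mul]
        congr 1
        ring
    have h1 : (CPG.phi g) ^ (4 ^ j) = CPG.phi g := by rw [← key, hEq]
    have hg1 : CPG.phi g ≠ 1 := fun h => hg (CPG.hinj (by rw [h, map_one]))
    have hvne : (CPG.phi g).toAdd ≠ 0 := fun h => hg1 (by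
      have : CPG.phi g = Multiplicative.ofAdd 0 := by
        rw [← h]; rfl
      simpa using this)
    have hv : ((4 ^ j : ℕ) : ZMod 11) * (CPG.phi g).toAdd = (CPG.phi g).toAdd := by
      have := congrArg Multiplicative.toAdd h1
      simpa [toAdd_pow, nsmul_eq_mul] using this
    haveI : Fact (Nat.Prime 11) := ⟨by norm_num⟩
    have hone : ((4 ^ j : ℕ) : ZMod 11) = 1 :=
      mul_right_cancel₀ hvne (hv.trans (one_mul _).symm)
    exact pow4_ne_one j hj1 hj4 hone
end
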